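/- arXiv:1901.01999 — 4 statements merged into one kernel-verified Lean document; each statement's English description precedes it below -/
import Mathlib

section
/- If α₁,…,α_l are arbitrary real numbers and 1, θ₁,…,θ_l are real algebraic numbers that are linearly independent over ℚ, then for every ε > 0 there exist an integer q and integers p₁,…,p_l such that |q·θ_j − p_j − α_j| < ε for all j = 1,…,l. -/
open Complex Finset Filter

noncomputable def kexp (x : ℝ) : ℂ := Complex.exp (((2 * Real.pi * x : ℝ) : ℂ) * Complex.I)

lemma kexp_add (x y : ℝ) : kexp (x + y) = kexp x * kexp y := by
  unfold kexp; rw [← Complex.exp_add]; congr 1; push_cast; ring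

lemma kexp_zero : kexp 0 = 1 := by
  unfold kexp; norm_num

lemma abs_kexp (x : ℝ) : ‖kexp x‖ = 1 := Complex.norm_exp_ofReal_mul_I _

lemma kexp_nat_mul (n : ℕ) (x : ℝ) : kexp ((n : ℝ) * x) = kexp x ^ n := by
  unfold kexp; rw [← Complex.exp_nat_mul]; congr 1; push_cast; ring

lemma kexp_sum {ι : Type*} (s : Finset ι) (f : ι → ℝ) :
    kexp (∑ i ∈ s, f i) = ∏ i ∈ s, kexp (f i) := by
  classical
  induction s using Finset.induction_on with
  | empty => simp [kexp_zero]
  | insert _ _ h ih => rw [Finset.sum_insert h, Finset.prod_insert h, kexp_add, ih]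

lemma kexp_eq_one_iff {x : ℝ} : kexp x = 1 ↔ ∃ p : ℤ, x = p := by
  unfold kexp
  rw [Complex.exp_eq_one_iff]
  constructor
  · rintro ⟨n, hn⟩
    refine ⟨n, ?_⟩
    push_cast at hn
    have h1 : ((2 * Real.pi * x : ℝ) : ℂ) * Complex.I = ((2 * Real.pi * (n : ℝ) : ℝ) : ℂ) * Complex.I := by
      push_cast; linear_combination hn
    have h2 : (2 * Real.pi * x : ℝ) = 2 * Real.pi * (n : ℝ) := by
      exact_mod_cast mul_right_cancel₀ Complex.I_ne_zero h1
    have hpi : (2 * Real.pi) ≠ 0 := by positivity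
    have := mul_left_cancel₀ hpi (by linarith : (2 * Real.pi) * x = (2 * Real.pi) * (n : ℝ))
    exact this
  · rintro ⟨p, rfl⟩
    exact ⟨p, by push_cast; ring⟩

lemma abs_one_add_kexp (t : ℝ) :
    ‖kexp t + 1‖ = 2 * |Real.cos (Real.pi * t)| := by
  have key : kexp t + 1 = kexp (t / 2) * ((2 * Real.cos (Real.pi * t) : ℝ) : ℂ) := by
    have h2cos : ((2 * Real.cos (Real.pi * t) : ℝ) : ℂ)
        = Complex.exp (((Real.pi * t : ℝ) : ℂ) * Complex.I)
          + Complex.exp (-(((Real.pi * t : ℝ) : ℂ)) * Complex.I) := by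
      push_cast
      exact Complex.two_cos _
    rw [h2cos]
    unfold kexp
    rw [mul_add, ← Complex.exp_add, ← Complex.exp_add]
    have e1 : ((2 * Real.pi * (t / 2) : ℝ) : ℂ) * Complex.I + ((Real.pi * t : ℝ) : ℂ) * Complex.I
        = ((2 * Real.pi * t : ℝ) : ℂ) * Complex.I := by push_cast; ring
    have e2 : ((2 * Real.pi * (t / 2) : ℝ) : ℂ) * Complex.I + -(((Real.pi * t : ℝ) : ℂ)) * Complex.I
        = 0 := by push_cast; ring
    rw [e1, e2, Complex.exp_zero]
  rw [key, norm_mul, abs_kexp, one_mul, Complex.norm_real, Real.norm_eq_abs, abs_mul]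
  norm_num

lemma abs_one_add_kexp_le {t ε' : ℝ} (hε'0 : 0 < ε') (hε'le : ε' ≤ 1 / 2)
    (h : ∀ p : ℤ, ε' ≤ |t - p|) :
    ‖kexp t + 1‖ ≤ 2 * Real.cos (Real.pi * ε') := by
  rw [abs_one_add_kexp]
  have hd1 : ε' ≤ |t - round t| := h (round t)
  have hd2 : |t - round t| ≤ 1 / 2 := abs_sub_round t
  set r := t - round t with hr
  have hnn : 0 ≤ Real.cos (Real.pi * |r|) := by
    apply Real.cos_nonneg_of_mem_Icc
    constructor
    · nlinarith [Real.pi_pos, abs_nonneg r]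
    · nlinarith [Real.pi_pos, abs_nonneg r]
  have heq : Real.cos (Real.pi * |r|) = Real.cos (Real.pi * r) := by
    rcases abs_choice r with hh | hh <;> rw [hh]
    rw [mul_neg, Real.cos_neg]
  have hcos : |Real.cos (Real.pi * t)| = Real.cos (Real.pi * |r|) := by
    have ht : t = (round t : ℝ) + r := by rw [hr]; ring
    rw [ht, mul_add, Real.cos_add]
    rw [show (Real.pi * (round t : ℝ)) = ((round t : ℤ) : ℝ) * Real.pi by push_cast; ring]
    rw [Real.sin_int_mul_pi, zero_mul, sub_zero, abs_mul, Real.abs_cos_int_mul_pi, one_mul]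
    rw [← heq, _root_.abs_of_nonneg hnn]
  rw [hcos]
  have := Real.cos_le_cos_of_nonneg_of_le_pi (x := Real.pi * ε') (y := Real.pi * |r|)
    (by positivity) (by nlinarith [Real.pi_pos]) (by nlinarith [Real.pi_pos])
  linarith

lemma lin_indep_combo {l : ℕ} {θ : Fin l → ℝ}
    (hli : LinearIndependent ℚ (Fin.cons (1 : ℝ) θ : Fin (l + 1) → ℝ))
    (c : Fin l → ℚ) (z : ℚ) (h : ∑ j, (c j : ℝ) * θ j = (z : ℝ)) : ∀ j, c j = 0 := by
  have key := Fintype.linearIndependent_iff.mp hli (Fin.cons (-z) c) ?_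
  · intro j
    have := key j.succ
    rwa [Fin.cons_succ] at this
  · rw [Fin.sum_univ_succ]
    simp only [Fin.cons_zero, Fin.cons_succ]
    rw [Rat.smul_def]
    push_cast
    rw [mul_one]
    have : ∀ j : Fin l, (c j) • (θ j) = (c j : ℝ) * θ j := fun j => Rat.smul_def _ _
    rw [Finset.sum_congr rfl (fun j _ => this j), h]
    ring

/-- Kronecker's simultaneous approximation theorem. -/
theorem kronecker_approximation (l : ℕ) (α θ : Fin l → ℝ)
    (halg : ∀ j, IsAlgebraic ℚ (θ j))
    (hli : LinearIndependent ℚ (Fin.cons (1 : ℝ) θ : Fin (l + 1) → ℝ)) :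
    ∀ ε > 0, ∃ (q : ℤ) (p : Fin l → ℤ),
      ∀ j, |(q : ℝ) * θ j - (p j : ℝ) - α j| < ε := by
  intro ε hε
  by_contra hcon
  push_neg at hcon
  classical
  -- for every n : ℕ there is a coordinate j that is badly approximated
  have hn : ∀ n : ℕ, ∃ j, ∀ p : ℤ, ε ≤ |((n : ℝ) * θ j - α j) - p| := by
    intro n
    by_contra hc
    push_neg at hc
    have hc' : ∀ j, ∃ p : ℤ, |((n : ℝ) * θ j - α j) - p| < ε := fun j => hc j
    choose p hp using hc'
    obtain ⟨j, hj⟩ := hcon (n : ℤ) p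
    have heq : ((n : ℤ) : ℝ) * θ j - (p j : ℝ) - α j = ((n : ℝ) * θ j - α j) - p j := by
      push_cast; ring
    rw [heq] at hj
    exact absurd (hp j) (not_lt.2 hj)
  obtain ⟨j₀, -⟩ := hn 0
  have hl : 1 ≤ l := j₀.pos
  -- set up ε' and ρ
  set ε' : ℝ := min ε (1 / 2) with hε'def
  have hε'0 : 0 < ε' := lt_min hε (by norm_num)
  have hε'le : ε' ≤ 1 / 2 := min_le_right _ _
  set ρ : ℝ := Real.cos (Real.pi * ε') with hρdef
  have hρ0 : 0 ≤ ρ := by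
    apply Real.cos_nonneg_of_mem_Icc
    constructor
    · nlinarith [Real.pi_pos]
    · nlinarith [Real.pi_pos]
  have hρ1 : ρ < 1 := by
    have h := Real.cos_lt_cos_of_nonneg_of_le_pi (x := 0) (y := Real.pi * ε')
      le_rfl (by nlinarith [Real.pi_pos]) (by positivity)
    simpa [Real.cos_zero] using h
  -- choose k with (k+1)^l * ρ^k < 1
  obtain ⟨k, hk1, hk2⟩ : ∃ k : ℕ, 1 ≤ k ∧ ((k : ℝ) + 1) ^ l * ρ ^ k < 1 := by
    rcases eq_or_lt_of_le hρ0 with h0 | h0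
    · exact ⟨1, le_rfl, by rw [← h0]; norm_num⟩
    · have h1 : Filter.Tendsto (fun n : ℕ => (n : ℝ) ^ l * ρ ^ n) Filter.atTop (nhds 0) :=
        tendsto_pow_const_mul_const_pow_of_lt_one l hρ0 hρ1
      have h2 : Filter.Tendsto (fun n : ℕ => ((n + 1 : ℕ) : ℝ) ^ l * ρ ^ (n + 1))
          Filter.atTop (nhds 0) := h1.comp (Filter.tendsto_add_atTop_nat 1)
      have h3 : Filter.Tendsto (fun n : ℕ => ((n : ℝ) + 1) ^ l * ρ ^ n) Filter.atTop (nhds 0) := by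
        have h4 := h2.const_mul (ρ⁻¹)
        rw [mul_zero] at h4
        apply h4.congr
        intro n
        push_cast
        rw [pow_succ]
        field_simp
      have h5 := h3.eventually_lt_const (by norm_num : (0 : ℝ) < 1)
      obtain ⟨k, hk1, hk2⟩ := (h5.and (Filter.eventually_ge_atTop 1)).exists
      exact ⟨k, hk2, hk1⟩
  -- the exponential product
  set t : ℕ → Fin l → ℝ := fun n j => (n : ℝ) * θ j - α j with htdef
  set ψ : ℕ → ℂ := fun n => ∏ j, (kexp (t n j) + 1) with hψdef
  set B : ℝ := ρ * 2 ^ l with hBdef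
  have hψbound : ∀ n, ‖ψ n‖ ≤ B := by
    intro n
    obtain ⟨j, hj⟩ := hn n
    rw [hψdef]
    simp only
    rw [norm_prod]
    rw [← Finset.mul_prod_erase Finset.univ _ (Finset.mem_univ j)]
    have h1 : ‖kexp (t n j) + 1‖ ≤ 2 * ρ := by
      apply abs_one_add_kexp_le hε'0 hε'le
      intro p
      exact le_trans (min_le_left _ _) (hj p)
    have h2 : ∏ j' ∈ Finset.univ.erase j, ‖kexp (t n j') + 1‖ ≤ 2 ^ (l - 1) := by
      have h3 : ∏ j' ∈ Finset.univ.erase j, ‖kexp (t n j') + 1‖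
          ≤ ∏ _j' ∈ Finset.univ.erase j, (2 : ℝ) := by
        apply Finset.prod_le_prod (fun x _ => norm_nonneg _)
        intro x _
        calc ‖kexp (t n x) + 1‖ ≤ ‖kexp (t n x)‖ + ‖(1 : ℂ)‖ :=
              norm_add_le _ _
          _ = 2 := by rw [abs_kexp, norm_one]; norm_num
      rwa [Finset.prod_const, Finset.card_erase_of_mem (Finset.mem_univ j), Finset.card_univ,
        Fintype.card_fin] at h3
    calc ‖kexp (t n j) + 1‖
          * ∏ j' ∈ Finset.univ.erase j, ‖kexp (t n j') + 1‖
        ≤ (2 * ρ) * 2 ^ (l - 1) := by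
          apply mul_le_mul h1 h2 (Finset.prod_nonneg fun x _ => norm_nonneg _)
            (by positivity)
      _ = B := by
          rw [hBdef]
          have h4 : (2 : ℝ) ^ l = 2 * 2 ^ (l - 1) := by
            conv_lhs => rw [show l = (l - 1) + 1 by omega]
            rw [pow_succ']
          rw [h4]; ring
  -- frequencies and coefficients
  set F : (Fin l → ℕ) → ℝ := fun m => ∑ j, (m j : ℝ) * θ j with hFdef
  set m₀ : Fin l → ℕ := fun _ => k / 2 with hm₀def
  set P : Finset (Fin l → ℕ) := Fintype.piFinset (fun _ : Fin l => Finset.range (k + 1))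
    with hPdef
  have hm₀P : m₀ ∈ P := by
    rw [hPdef, Fintype.mem_piFinset]
    intro j
    rw [Finset.mem_range]
    show k / 2 < k + 1
    omega
  set C : (Fin l → ℕ) → ℂ := fun m =>
    (∏ j, (k.choose (m j) : ℂ)) * kexp (-∑ j, (m j : ℝ) * α j) with hCdef
  -- frequencies are distinct mod 1
  have hfreq : ∀ m : Fin l → ℕ, ∀ m' : Fin l → ℕ, kexp (F m - F m') = 1 → m = m' := by
    intro m m' hone
    obtain ⟨p, hp⟩ := kexp_eq_one_iff.mp hone
    have hsum : ∑ j, (((m j : ℚ) - (m' j : ℚ) : ℚ) : ℝ) * θ j = ((p : ℚ) : ℝ) := by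
      push_cast
      rw [hFdef] at hp
      simp only at hp
      rw [Finset.sum_congr rfl (fun j _ => sub_mul ((m j : ℝ)) ((m' j : ℝ)) (θ j)),
        Finset.sum_sub_distrib]
      push_cast at hp
      linarith
    have hz := lin_indep_combo hli _ _ hsum
    funext j
    have hj := hz j
    have hq : (m j : ℚ) = (m' j : ℚ) := by linarith [hj]
    exact_mod_cast hq
  -- binomial expansion of ψ n ^ k
  have hexp : ∀ n : ℕ, ψ n ^ k = ∑ m ∈ P, C m * kexp ((n : ℝ) * F m) := by
    intro n
    rw [hψdef]
    simp only
    rw [← Finset.prod_pow]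
    have h1 : ∀ j : Fin l, (kexp (t n j) + 1) ^ k
        = ∑ i ∈ Finset.range (k + 1), (kexp (t n j)) ^ i * (k.choose i : ℂ) := by
      intro j
      rw [add_pow]
      apply Finset.sum_congr rfl
      intro i _
      rw [one_pow, mul_one]
    rw [Finset.prod_congr rfl (fun j _ => h1 j), Finset.prod_univ_sum]
    apply Finset.sum_congr rfl
    intro m hm
    rw [Finset.prod_mul_distrib]
    have h2 : ∏ j, (kexp (t n j)) ^ (m j)
        = kexp ((n : ℝ) * F m) * kexp (-∑ j, (m j : ℝ) * α j) := by
      have h3 : ∀ j : Fin l, (kexp (t n j)) ^ (m j) = kexp ((m j : ℝ) * t n j) := by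
        intro j; rw [kexp_nat_mul]
      rw [Finset.prod_congr rfl (fun j _ => h3 j), ← kexp_sum, ← kexp_add]
      congr 1
      rw [hFdef, htdef]
      simp only
      rw [Finset.mul_sum, ← Finset.sum_neg_distrib]
      rw [← Finset.sum_add_distrib]
      apply Finset.sum_congr rfl
      intro j _
      ring
    rw [h2, hCdef]
    ring
  -- the averages and their limits
  set w : (Fin l → ℕ) → ℂ := fun m => kexp (F m - F m₀) with hwdef
  set S : (Fin l → ℕ) → ℕ → ℂ := fun m N => (N : ℂ)⁻¹ * ∑ n ∈ Finset.range N, (w m) ^ n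
    with hSdef
  have hS : ∀ m ∈ P, Filter.Tendsto (S m) Filter.atTop (nhds (if m = m₀ then 1 else 0)) := by
    intro m _
    by_cases hm : m = m₀
    · subst hm
      rw [if_pos rfl]
      have hw1 : w m₀ = 1 := by rw [hwdef]; simp only; rw [sub_self, kexp_zero]
      apply Filter.Tendsto.congr' _ tendsto_const_nhds
      filter_upwards [Filter.eventually_ge_atTop 1] with N hN
      have hNne : (N : ℂ) ≠ 0 := Nat.cast_ne_zero.mpr (by omega)
      have h6 : (N : ℂ)⁻¹ * ∑ _n ∈ Finset.range N, (w m₀) ^ _n = 1 := by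
        simp only [hw1, one_pow, Finset.sum_const, Finset.card_range, nsmul_eq_mul, mul_one]
        exact inv_mul_cancel₀ hNne
      exact h6.symm
    · rw [if_neg hm]
      have hwne : w m ≠ 1 := fun h => hm (hfreq m m₀ h)
      apply squeeze_zero_norm (a := fun N : ℕ => (2 / ‖w m - 1‖) / N)
      · intro N
        show ‖(N : ℂ)⁻¹ * ∑ n ∈ Finset.range N, (w m) ^ n‖ ≤ _
        rw [geom_sum_eq hwne]
        rw [norm_mul, norm_inv, Complex.norm_natCast, norm_div]
        have hb : ‖(w m) ^ N - 1‖ ≤ 2 := by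
          calc ‖(w m) ^ N - 1‖ ≤ ‖(w m) ^ N‖ + ‖(1 : ℂ)‖ := norm_sub_le _ _
            _ = 2 := by
                rw [norm_pow, hwdef]
                simp only [abs_kexp, one_pow, norm_one]
                norm_num
        calc (N : ℝ)⁻¹ * (‖(w m) ^ N - 1‖ / ‖w m - 1‖)
            ≤ (N : ℝ)⁻¹ * (2 / ‖w m - 1‖) := by gcongr
          _ = (2 / ‖w m - 1‖) / N := by
              ring
      · exact tendsto_const_div_atTop_nhds_zero_nat _
  -- the average of ψ^k against the m₀ frequency tends to C m₀
  have hA : Filter.Tendsto (fun N => ∑ m ∈ P, C m * S m N) Filter.atTop (nhds (C m₀)) := by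
    have h1 := tendsto_finset_sum P (fun m hm => ((hS m hm).const_mul (C m)))
    have h2 : ∑ m ∈ P, C m * (if m = m₀ then 1 else 0) = C m₀ := by
      rw [Finset.sum_congr rfl (fun m _ => by rw [mul_ite, mul_one, mul_zero])]
      rw [Finset.sum_ite_eq' P m₀ C, if_pos hm₀P]
    rwa [h2] at h1
  -- rewrite the average
  have hAeq : ∀ N : ℕ, ∑ m ∈ P, C m * S m N
      = (N : ℂ)⁻¹ * ∑ n ∈ Finset.range N, ψ n ^ k * kexp (-((n : ℝ) * F m₀)) := by
    intro N
    have hterm : ∀ n : ℕ, ψ n ^ k * kexp (-((n : ℝ) * F m₀)) = ∑ m ∈ P, C m * (w m) ^ n := by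
      intro n
      rw [hexp n, Finset.sum_mul]
      apply Finset.sum_congr rfl
      intro m _
      rw [mul_assoc, ← kexp_add]
      congr 2
      rw [hwdef]
      simp only
      rw [← kexp_nat_mul]
      congr 1
      ring
    rw [Finset.sum_congr rfl (fun n _ => hterm n), Finset.sum_comm, Finset.mul_sum]
    apply Finset.sum_congr rfl
    intro m _
    show C m * ((N : ℂ)⁻¹ * ∑ n ∈ Finset.range N, (w m) ^ n)
        = (N : ℂ)⁻¹ * ∑ n ∈ Finset.range N, C m * (w m) ^ n
    rw [Finset.mul_sum, Finset.mul_sum, Finset.mul_sum]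
    exact Finset.sum_congr rfl (fun n _ => by ring)
  -- norm bound on the average
  have hAbound : ∀ N : ℕ, 1 ≤ N →
      ‖(N : ℂ)⁻¹ * ∑ n ∈ Finset.range N, ψ n ^ k * kexp (-((n : ℝ) * F m₀))‖ ≤ B ^ k := by
    intro N hN
    rw [norm_mul, norm_inv, Complex.norm_natCast]
    have h1 : ‖∑ n ∈ Finset.range N, ψ n ^ k * kexp (-((n : ℝ) * F m₀))‖ ≤ N * B ^ k := by
      refine le_trans (norm_sum_le _ _) ?_
      have h2 : ∀ n ∈ Finset.range N, ‖ψ n ^ k * kexp (-((n : ℝ) * F m₀))‖ ≤ B ^ k := by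
        intro n _
        rw [norm_mul, norm_pow, abs_kexp, mul_one]
        exact pow_le_pow_left₀ (norm_nonneg _) (hψbound n) k
      calc ∑ n ∈ Finset.range N, ‖ψ n ^ k * kexp (-((n : ℝ) * F m₀))‖
          ≤ (Finset.range N).card • (B ^ k) := Finset.sum_le_card_nsmul _ _ _ h2
        _ = N * B ^ k := by rw [Finset.card_range, nsmul_eq_mul]
    have hN0 : (0 : ℝ) < N := by exact_mod_cast hN
    calc (N : ℝ)⁻¹ * ‖∑ n ∈ Finset.range N, ψ n ^ k * kexp (-((n : ℝ) * F m₀))‖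
        ≤ (N : ℝ)⁻¹ * (N * B ^ k) := by gcongr
      _ = B ^ k := by field_simp
  -- conclude the key inequality
  have hfinal : ‖C m₀‖ ≤ B ^ k := by
    apply le_of_tendsto hA.norm
    filter_upwards [Filter.eventually_ge_atTop 1] with N hN
    rw [hAeq N]
    exact hAbound N hN
  have hCval : ‖C m₀‖ = (k.choose (k / 2) : ℝ) ^ l := by
    rw [hCdef]
    simp only
    rw [norm_mul, abs_kexp, mul_one, norm_prod]
    rw [Finset.prod_congr rfl (fun j _ => by rw [Complex.norm_natCast] :
      ∀ j ∈ Finset.univ, ‖((k.choose (m₀ j) : ℂ))‖ = ((k.choose (m₀ j) : ℝ)))]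
    rw [hm₀def]
    simp only
    rw [Finset.prod_const, Finset.card_univ, Fintype.card_fin]
  -- binomial bound
  have hbin : (2 : ℝ) ^ k ≤ ((k : ℝ) + 1) * (k.choose (k / 2) : ℝ) := by
    have h1 : (2 : ℕ) ^ k = ∑ i ∈ Finset.range (k + 1), k.choose i :=
      (Nat.sum_range_choose k).symm
    have h2 : ∑ i ∈ Finset.range (k + 1), k.choose i ≤ (k + 1) * k.choose (k / 2) := by
      calc ∑ i ∈ Finset.range (k + 1), k.choose i
          ≤ (Finset.range (k + 1)).card • (k.choose (k / 2)) :=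
            Finset.sum_le_card_nsmul _ _ _ (fun i _ => Nat.choose_le_middle i k)
        _ = (k + 1) * k.choose (k / 2) := by rw [Finset.card_range, smul_eq_mul]
    have h3 : (2 : ℕ) ^ k ≤ (k + 1) * k.choose (k / 2) := h1 ▸ h2
    exact_mod_cast h3
  -- numeric contradiction
  set c : ℝ := (k.choose (k / 2) : ℝ) with hcdef
  have hc0 : (0 : ℝ) ≤ c := Nat.cast_nonneg _
  have h5 : c ^ l ≤ B ^ k := hCval ▸ hfinal
  have habs : ((2 : ℝ) ^ l) ^ k < ((2 : ℝ) ^ l) ^ k := by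
    calc ((2 : ℝ) ^ l) ^ k = ((2 : ℝ) ^ k) ^ l := by
          rw [← pow_mul, ← pow_mul, Nat.mul_comm]
      _ ≤ (((k : ℝ) + 1) * c) ^ l := pow_le_pow_left₀ (by positivity) hbin l
      _ = ((k : ℝ) + 1) ^ l * c ^ l := mul_pow _ _ _
      _ ≤ ((k : ℝ) + 1) ^ l * B ^ k := by
          apply mul_le_mul_of_nonneg_left h5 (by positivity)
      _ = (((k : ℝ) + 1) ^ l * ρ ^ k) * ((2 : ℝ) ^ l) ^ k := by
          rw [hBdef, mul_pow]; ring
      _ < 1 * ((2 : ℝ) ^ l) ^ k := by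
          apply mul_lt_mul_of_pos_right hk2 (by positivity)
      _ = ((2 : ℝ) ^ l) ^ k := one_mul _
  exact lt_irrefl _ habs
end

section
/- Let G be a graph with adjacency matrix A and transition matrix H(t) = exp(−itA). Suppose G is periodic, i.e., there exist τ ≠ 0 and γ ∈ ℂ with |γ| = 1 such that H(τ) = γI. Then G admits perfect state transfer between vertices u and v if and only if it admits pretty good state transfer between u and v. -/
open Matrix Complex Filter Topology

attribute [local instance] Matrix.linftyOpNormedRing Matrix.linftyOpNormedAlgebra

/-- Transition matrix `H(t) = exp(-itA)` of a graph with adjacency matrix `A`. -/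
noncomputable def transM {n : ℕ} (A : Matrix (Fin n) (Fin n) ℂ) (t : ℝ) :
    Matrix (Fin n) (Fin n) ℂ :=
  NormedSpace.exp ((-(t : ℂ) * Complex.I) • A)

/-- The standard basis vector `e_u` of `ℂⁿ`. -/
def eVec {n : ℕ} (u : Fin n) : Fin n → ℂ := Pi.single u 1

lemma transM_add {n : ℕ} (A : Matrix (Fin n) (Fin n) ℂ) (s t : ℝ) :
    transM A (s + t) = transM A s * transM A t := by
  unfold transM
  rw [← Matrix.exp_add_of_commute]
  · congr 1
    rw [← add_smul]
    congr 1
    push_cast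
    ring
  · exact ((Commute.refl A).smul_left _).smul_right _

lemma transM_continuous {n : ℕ} (A : Matrix (Fin n) (Fin n) ℂ) :
    Continuous fun t : ℝ => transM A t := by
  unfold transM
  exact NormedSpace.exp_continuous.comp
    (((Complex.continuous_ofReal.neg).mul continuous_const).smul continuous_const)

/-- For a periodic graph, perfect state transfer is equivalent to pretty good
state transfer. -/
theorem pst_iff_pgst_of_periodic {n : ℕ} (G : SimpleGraph (Fin n)) [DecidableRel G.Adj]
    (u v : Fin n)
    (τ : ℝ) (hτ : τ ≠ 0) (γ₀ : ℂ) (hγ₀ : ‖γ₀‖ = 1)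
    (hper : transM (G.adjMatrix ℂ) τ = γ₀ • (1 : Matrix (Fin n) (Fin n) ℂ)) :
    (∃ (t₀ : ℝ) (γ : ℂ), ‖γ‖ = 1 ∧
        transM (G.adjMatrix ℂ) t₀ *ᵥ eVec u = γ • eVec v) ↔
    (∃ (t : ℕ → ℝ) (γ : ℂ), ‖γ‖ = 1 ∧
        Tendsto (fun k => transM (G.adjMatrix ℂ) (t k) *ᵥ eVec u) atTop
          (nhds (γ • eVec v))) := by
  set A := G.adjMatrix ℂ with hA
  constructor
  · rintro ⟨t₀, γ, hγ, h⟩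
    exact ⟨fun _ => t₀, γ, hγ, by simp only [h]; exact tendsto_const_nhds⟩
  · rintro ⟨t, γ, hγ, htend⟩
    have hγ₀ne : γ₀ ≠ 0 := by
      intro h; rw [h] at hγ₀; simp at hγ₀
    -- step lemma
    have hstep : ∀ s : ℝ, transM A (s + τ) = γ₀ • transM A s := by
      intro s
      rw [add_comm, transM_add, hper, Matrix.smul_mul, one_mul]
    have hstep' : ∀ s : ℝ, transM A (s - τ) = γ₀⁻¹ • transM A s := by
      intro s
      have := hstep (s - τ)
      rw [sub_add_cancel] at this
      rw [this, smul_smul, inv_mul_cancel₀ hγ₀ne, one_smul]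
    have hshift : ∀ (m : ℤ) (s : ℝ), transM A (s + m * τ) = γ₀ ^ m • transM A s := by
      intro m
      induction m using Int.induction_on with
      | zero => intro s; simp
      | succ k ih =>
        intro s
        have h1 : s + (((k : ℤ) + 1 : ℤ) : ℝ) * τ = (s + (((k : ℤ) : ℤ) : ℝ) * τ) + τ := by
          push_cast; ring
        rw [h1, hstep, ih, smul_smul]
        rw [zpow_add₀ hγ₀ne, zpow_one, mul_comm]
      | pred k ih =>
        intro s
        have h1 : s + ((-(k : ℤ) - 1 : ℤ) : ℝ) * τ = (s + ((-(k : ℤ) : ℤ) : ℝ) * τ) - τ := by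
          push_cast; ring
        rw [h1, hstep', ih, smul_smul]
        rw [sub_eq_add_neg, zpow_add₀ hγ₀ne, _root_.zpow_neg_one, mul_comm]
    -- decomposition t k = s k + m k * τ with s k bounded
    set m : ℕ → ℤ := fun k => ⌊t k / τ⌋ with hm
    set s : ℕ → ℝ := fun k => t k - (m k : ℝ) * τ with hs
    have hts : ∀ k, t k = s k + (m k : ℝ) * τ := by intro k; simp [hs]
    have hsb : ∀ k, s k ∈ Set.Icc (-|τ|) |τ| := by
      intro k
      rw [Set.mem_Icc, ← abs_le]
      have h1 : |t k / τ - (m k : ℝ)| ≤ 1 := by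
        rw [abs_le]
        constructor
        · linarith [Int.floor_le (t k / τ)]
        · linarith [Int.lt_floor_add_one (t k / τ)]
      have : s k = (t k / τ - (m k : ℝ)) * τ := by
        field_simp [hs]
        ring
      rw [this, abs_mul]
      calc |t k / τ - (m k : ℝ)| * |τ| ≤ 1 * |τ| :=
            mul_le_mul_of_nonneg_right h1 (abs_nonneg τ)
        _ = |τ| := one_mul _
    have habs : ∀ k, ‖γ₀ ^ m k‖ = 1 := by
      intro k
      rw [norm_zpow, hγ₀, _root_.one_zpow]
    -- compactness
    have hK : IsCompact ((Set.Icc (-|τ|) |τ|) ×ˢ Metric.sphere (0 : ℂ) 1) :=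
      isCompact_Icc.prod (isCompact_sphere 0 1)
    obtain ⟨⟨s₀, δ⟩, hmem, φ, hφ, hlim⟩ :=
      hK.tendsto_subseq (x := fun k => ((s k, γ₀ ^ m k) : ℝ × ℂ))
        (fun k => ⟨hsb k, by
          rw [Metric.mem_sphere, dist_zero_right, habs]⟩)
    have hδ1 : ‖δ‖ = 1 := by
      have := hmem.2
      rwa [Metric.mem_sphere, dist_zero_right] at this
    have hδne : δ ≠ 0 := by
      intro h; rw [h] at hδ1; simp at hδ1
    have hslim : Tendsto (fun k => s (φ k)) atTop (𝓝 s₀) :=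
      (continuous_fst.tendsto _).comp hlim
    have hδlim : Tendsto (fun k => γ₀ ^ m (φ k)) atTop (𝓝 δ) :=
      (continuous_snd.tendsto _).comp hlim
    -- continuity of the vector map
    have hcont : Continuous fun r : ℝ => transM A r *ᵥ eVec u :=
      (transM_continuous A).matrix_mulVec continuous_const
    have hrw : ∀ k, transM A (t k) *ᵥ eVec u
        = γ₀ ^ m k • (transM A (s k) *ᵥ eVec u) := by
      intro k
      rw [hts k, hshift, Matrix.smul_mulVec]
    have hlim1 : Tendsto (fun k => transM A (t (φ k)) *ᵥ eVec u) atTop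
        (𝓝 (δ • (transM A s₀ *ᵥ eVec u))) := by
      simp only [hrw]
      exact hδlim.smul (((hcont.tendsto s₀).comp hslim))
    have hlim2 : Tendsto (fun k => transM A (t (φ k)) *ᵥ eVec u) atTop
        (𝓝 (γ • eVec v)) := htend.comp hφ.tendsto_atTop
    have heq : δ • (transM A s₀ *ᵥ eVec u) = γ • eVec v :=
      tendsto_nhds_unique hlim1 hlim2
    refine ⟨s₀, δ⁻¹ * γ, ?_, ?_⟩
    · rw [norm_mul, norm_inv, hδ1, hγ, inv_one, one_mul]
    · have := congrArg (fun x => δ⁻¹ • x) heq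
      simp only [smul_smul, inv_mul_cancel₀ hδne, one_smul] at this
      exact this
end

section
/- Let n = 2^k with k ≥ 3, and let ω = exp(2πi/n). The real numbers λ_l = 2cos(2πl/n) for l = 0, 1, …, n/4 − 1 (the distinct positive eigenvalues of the n-cycle, together with λ₀ = 2) are linearly independent over ℚ. -/
open Real

lemma two_cos_complex (w : ℂ) : 2 * Complex.cos w = Complex.exp (w * Complex.I) + Complex.exp (-w * Complex.I) := by
  rw [Complex.cos]; ring

/-- The distinct positive eigenvalues `λ_l = 2cos(2πl/2^k)`, `0 ≤ l < 2^{k-2}`,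
of the cycle `C_{2^k}` are linearly independent over `ℚ`. -/
theorem cycle_eigenvalues_linearIndependent (k : ℕ) (hk : 3 ≤ k) :
    LinearIndependent ℚ
      (fun l : Fin (2 ^ (k - 2)) =>
        2 * Real.cos (2 * Real.pi * (l : ℕ) / (2 ^ k : ℕ))) := by
  set q : ℕ := 2 ^ (k - 2) with hq
  set m : ℕ := 2 ^ (k - 1) with hm
  set n : ℕ := 2 ^ k with hn
  have hk1 : k - 1 = (k - 2) + 1 := by omega
  have hk0 : k = (k - 1) + 1 := by omega
  have hmq : m = 2 * q := by rw [hm, hq, hk1, pow_succ]; ring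
  have hnm : n = 2 * m := by rw [hn, hm]; nth_rewrite 1 [hk0]; rw [pow_succ]; ring
  have hq1 : 1 ≤ q := Nat.one_le_two_pow
  have hqm : q < m := by omega
  have hn0 : (n : ℕ) ≠ 0 := by positivity
  set ζ : ℂ := Complex.exp (2 * Real.pi * Complex.I / n) with hζ
  have hprim : IsPrimitiveRoot ζ n := Complex.isPrimitiveRoot_exp n hn0
  -- degree of minimal polynomial
  have hdeg : (minpoly ℚ ζ).natDegree = m := by
    rw [← Polynomial.cyclotomic_eq_minpoly_rat hprim (Nat.pos_of_ne_zero hn0),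
      Polynomial.natDegree_cyclotomic, hn, Nat.totient_prime_pow Nat.prime_two (by omega : 0 < k)]
    simp [hm]
  have hpowLI : LinearIndependent ℚ fun i : Fin m => ζ ^ (i : ℕ) := by
    have := linearIndependent_pow (K := ℚ) ζ
    rwa [hdeg] at this
  have hpow : ∀ c : Fin m → ℚ, (∑ j : Fin m, c j • ζ ^ (j : ℕ)) = 0 → ∀ j, c j = 0 :=
    Fintype.linearIndependent_iff.mp hpowLI
  -- powers of ζ as exponentials
  have hζpow : ∀ a : ℕ, ζ ^ a = Complex.exp (2 * Real.pi * Complex.I * a / n) := by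
    intro a
    rw [hζ, ← Complex.exp_nat_mul]
    ring_nf
  have hnC : (n : ℂ) ≠ 0 := Nat.cast_ne_zero.mpr hn0
  -- the key identity:  2 cos(2πl/n) = ζ^l - ζ^(m-l)  for l < q
  have hlam : ∀ l : ℕ, l < q →
      ((2 * Real.cos (2 * Real.pi * l / n) : ℝ) : ℂ) = ζ ^ l - ζ ^ (m - l) := by
    intro l hl
    have hlm : l ≤ m := by omega
    have e1 : ζ ^ l = Complex.exp ((2 * Real.pi * l / n : ℝ) * Complex.I) := by
      rw [hζpow l]; push_cast; ring_nf
    have e2 : ζ ^ (m - l) =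
        Complex.exp ((Real.pi : ℂ) * Complex.I - (2 * Real.pi * l / n : ℝ) * Complex.I) := by
      rw [hζpow (m - l)]
      congr 1
      have : ((m - l : ℕ) : ℂ) = (m : ℂ) - l := by
        push_cast [Nat.cast_sub hlm]; ring
      rw [this]
      have hnm' : (n : ℂ) = 2 * m := by exact_mod_cast congrArg (Nat.cast (R := ℂ)) hnm
      have hmC : (m : ℂ) ≠ 0 := by
        intro h; rw [h, mul_zero] at hnm'; exact hnC hnm'
      push_cast
      rw [hnm']
      field_simp
    rw [e1, e2, Complex.exp_sub, Complex.exp_pi_mul_I]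
    push_cast [Complex.ofReal_cos]
    rw [two_cos_complex]
    rw [neg_mul, Complex.exp_neg]
    have hne : Complex.exp ((2 * Real.pi * l / n : ℝ) * Complex.I) ≠ 0 := Complex.exp_ne_zero _
    push_cast at hne ⊢
    field_simp
    ring
  -- main argument
  rw [Fintype.linearIndependent_iff]
  intro g hg
  -- extend g to ℕ by zero
  set g' : ℕ → ℚ := fun l => if h : l < q then g ⟨l, h⟩ else 0 with hg'
  have hg'0 : ∀ l, q ≤ l → g' l = 0 := by intro l hl; simp [hg', Nat.not_lt.mpr hl]
  -- move the relation to ℂ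
  have hgC : (∑ l ∈ Finset.range q, (g' l : ℂ) * (ζ ^ l - ζ ^ (m - l))) = 0 := by
    have := congrArg (fun x : ℝ => (x : ℂ)) hg
    simp only [Complex.ofReal_sum, Complex.ofReal_zero] at this
    rw [← Fin.sum_univ_eq_sum_range]
    rw [← this]
    apply Finset.sum_congr rfl
    intro l _
    rw [← hlam l l.isLt]
    have : g' (l : ℕ) = g l := by simp [hg', l.isLt]
    rw [this]
    push_cast [Rat.smul_def]
    ring
  -- rewrite as a linear combination of powers ζ^j, j < m
  set c : ℕ → ℚ := fun j => g' j + (if j = 0 then g' 0 else 0) - (if q + 1 ≤ j then g' (m - j) else 0) with hc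
  have hsum : (∑ j ∈ Finset.range m, (c j : ℂ) * ζ ^ j) = 0 := by
    have hmid : ∀ j ∈ Finset.Ico (q + 1) m, q + 1 ≤ j := fun j hj => (Finset.mem_Ico.mp hj).1
    have split : (∑ j ∈ Finset.range m, (c j : ℂ) * ζ ^ j)
        = (∑ j ∈ Finset.range m, (g' j : ℂ) * ζ ^ j)
          + (∑ j ∈ Finset.range m, ((if j = 0 then g' 0 else 0 : ℚ) : ℂ) * ζ ^ j)
          - (∑ j ∈ Finset.range m, ((if q + 1 ≤ j then g' (m - j) else 0 : ℚ) : ℂ) * ζ ^ j) := by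
      rw [← Finset.sum_add_distrib, ← Finset.sum_sub_distrib]
      apply Finset.sum_congr rfl
      intro j _
      rw [hc]
      push_cast
      ring
    have A : (∑ j ∈ Finset.range m, (g' j : ℂ) * ζ ^ j) = ∑ l ∈ Finset.range q, (g' l : ℂ) * ζ ^ l := by
      symm
      apply Finset.sum_subset (Finset.range_subset_range.mpr hqm.le)
      intro x _ hx
      rw [hg'0 x (by simpa using hx)]
      simp
    have B : (∑ j ∈ Finset.range m, ((if j = 0 then g' 0 else 0 : ℚ) : ℂ) * ζ ^ j) = (g' 0 : ℂ) := by
      rw [Finset.sum_eq_single 0]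
      · simp
      · intro b _ hb; simp [hb]
      · intro h; exact absurd (Finset.mem_range.mpr (by omega)) h
    have C : (∑ j ∈ Finset.range m, ((if q + 1 ≤ j then g' (m - j) else 0 : ℚ) : ℂ) * ζ ^ j)
        = ∑ j ∈ Finset.Ico (q + 1) m, (g' (m - j) : ℂ) * ζ ^ j := by
      have hsub : Finset.Ico (q + 1) m ⊆ Finset.range m :=
        fun x hx => Finset.mem_range.mpr (Finset.mem_Ico.mp hx).2
      have hvan : ∀ x ∈ Finset.range m, x ∉ Finset.Ico (q + 1) m →
          ((if q + 1 ≤ x then g' (m - x) else 0 : ℚ) : ℂ) * ζ ^ x = 0 := by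
        intro x hxr hx
        have hxm : x < m := Finset.mem_range.mp hxr
        have : ¬ (q + 1 ≤ x) := fun h => hx (Finset.mem_Ico.mpr ⟨h, hxm⟩)
        simp [this]
      rw [← Finset.sum_subset hsub hvan]
      exact Finset.sum_congr rfl fun j hj => by simp [hmid j hj]
    -- reindex the Ico sum by l = m - j
    have D : (∑ j ∈ Finset.Ico (q + 1) m, (g' (m - j) : ℂ) * ζ ^ j)
        = ∑ l ∈ Finset.Ico 1 q, (g' l : ℂ) * ζ ^ (m - l) := by
      apply Finset.sum_nbij' (fun j => m - j) (fun l => m - l)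
      · intro j hj
        rw [Finset.mem_Ico] at hj ⊢
        omega
      · intro l hl
        rw [Finset.mem_Ico] at hl ⊢
        omega
      · intro j hj; rw [Finset.mem_Ico] at hj; omega
      · intro l hl; rw [Finset.mem_Ico] at hl; omega
      · intro j hj
        rw [Finset.mem_Ico] at hj
        congr 2
        omega
    -- now relate to hgC
    rw [split, A, B, C, D]
    have e0 : (∑ l ∈ Finset.range q, (g' l : ℂ) * (ζ ^ l - ζ ^ (m - l)))
        = (∑ l ∈ Finset.range q, (g' l : ℂ) * ζ ^ l) - ∑ l ∈ Finset.range q, (g' l : ℂ) * ζ ^ (m - l) := by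
      rw [← Finset.sum_sub_distrib]
      exact Finset.sum_congr rfl fun l _ => by ring
    have e1 : (∑ l ∈ Finset.range q, (g' l : ℂ) * ζ ^ (m - l))
        = (g' 0 : ℂ) * ζ ^ m + ∑ l ∈ Finset.Ico 1 q, (g' l : ℂ) * ζ ^ (m - l) := by
      rw [Finset.range_eq_Ico, Finset.sum_eq_sum_Ico_succ_bot (by omega : 0 < q)]
      simp
    have hζm : ζ ^ m = -1 := by
      rw [hζpow m]
      have hnm' : (n : ℂ) = 2 * m := by exact_mod_cast congrArg (Nat.cast (R := ℂ)) hnm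
      have hmC : (m : ℂ) ≠ 0 := by
        intro h; rw [h, mul_zero] at hnm'; exact hnC hnm'
      rw [← Complex.exp_pi_mul_I]
      congr 1
      rw [hnm']
      field_simp
    rw [e0, e1, hζm] at hgC
    linear_combination hgC
  -- apply linear independence of the powers
  have hcz : ∀ j : Fin m, c (j : ℕ) = 0 := by
    apply hpow
    rw [Fin.sum_univ_eq_sum_range (fun j => c j • ζ ^ j)]
    rw [← hsum]
    exact Finset.sum_congr rfl fun j _ => Rat.smul_def _ _
  -- conclude
  have hgg : ∀ j : Fin q, g' (j : ℕ) = g j := fun j => by simp [hg', j.isLt]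
  intro i
  have hiq : (i : ℕ) < q := i.isLt
  have hi := hcz ⟨(i : ℕ), by omega⟩
  simp only [hc] at hi
  rw [← hgg i]
  by_cases h0 : (i : ℕ) = 0
  · have hle : ¬ (q + 1 ≤ (i : ℕ)) := by omega
    have h2 : g' (i : ℕ) + g' 0 - 0 = 0 := by simpa [h0, hle] using hi
    rw [h0] at h2 ⊢
    linarith
  · have hle : ¬ (q + 1 ≤ (i : ℕ)) := by omega
    simpa [h0, hle] using hi
end

section
/- Let n = 2^k and let λ_l = 2cos(2πl/n) for 0 ≤ l ≤ n−1. For every δ > 0 there exists t of the form (2q+1)π/2 with q ∈ ℤ such that for each l there is an integer l' with |λ_l t − l'π| < δ/n. -/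
open Real Complex Finset Polynomial

namespace CEAH
attribute [local instance] FinsetCoe.fintype

noncomputable def e (x : ℝ) : ℂ := Complex.exp (2 * (π:ℂ) * Complex.I * x)

lemma e_add (x y : ℝ) : e (x + y) = e x * e y := by
  rw [e, e, e, ← Complex.exp_add]; push_cast; ring_nf

lemma e_zero : e 0 = 1 := by simp [e]

lemma e_int (n : ℤ) : e n = 1 := by
  rw [e, show 2 * (π:ℂ) * Complex.I * ((n:ℝ):ℂ) = (n:ℤ) * (2 * π * Complex.I) by push_cast; ring,
    Complex.exp_int_mul_two_pi_mul_I]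

lemma e_nat_mul (q : ℕ) (x : ℝ) : e ((q:ℝ) * x) = e x ^ q := by
  rw [e, e, ← Complex.exp_nat_mul]; push_cast; ring_nf

lemma abs_e (x : ℝ) : ‖e x‖ = 1 := by
  rw [e, Complex.norm_exp]
  have : (2 * (π:ℂ) * Complex.I * x).re = 0 := by simp [Complex.mul_re, Complex.mul_im]
  simp [this]

lemma e_ne_zero (x : ℝ) : e x ≠ 0 := Complex.exp_ne_zero _

lemma twopiI_ne_zero : (2 * (π:ℂ) * Complex.I) ≠ 0 := by
  simp [Real.pi_ne_zero, Complex.I_ne_zero, Complex.ofReal_ne_zero]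

lemma e_eq_one_iff {x : ℝ} : e x = 1 ↔ ∃ n : ℤ, x = n := by
  rw [e, Complex.exp_eq_one_iff]
  constructor
  · rintro ⟨n, hn⟩
    have h2 : (2 * (π:ℂ) * Complex.I) * x = (2 * (π:ℂ) * Complex.I) * n := by
      rw [hn]; ring
    have := mul_left_cancel₀ twopiI_ne_zero h2
    exact ⟨n, by exact_mod_cast this⟩
  · rintro ⟨n, hn⟩
    exact ⟨n, by rw [hn]; push_cast; ring⟩

lemma e_sum {ι : Type*} (s : Finset ι) (f : ι → ℝ) : e (∑ i ∈ s, f i) = ∏ i ∈ s, e (f i) := by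
  rw [e, Complex.ofReal_sum, Finset.mul_sum, Complex.exp_sum]
  rfl

lemma two_cos_eq (x : ℝ) : ((2 * Real.cos (π * x) : ℝ) : ℂ) ^ 2 = (1 + e x) * (1 + e (-x)) := by
  have h1 : e x + e (-x) = 2 * Complex.cos (2 * π * x) := by
    rw [e, e, Complex.two_cos]
    push_cast
    ring_nf
  have h2 : e x * e (-x) = 1 := by rw [← e_add]; simp [e_zero]
  have h3 : Complex.cos ((π:ℂ) * x) ^ 2 = 1/2 + Complex.cos (2 * ((π:ℂ) * x))/2 := Complex.cos_sq _
  have : ((2 * Real.cos (π * x) : ℝ) : ℂ)^2 = 2 + 2 * Complex.cos (2 * π * x) := by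
    push_cast
    rw [mul_pow, h3]
    ring_nf
  rw [this]
  have expand : (1 + e x) * (1 + e (-x)) = 1 + (e x + e (-x)) + e x * e (-x) := by ring
  rw [expand, h1, h2]; ring

lemma one_add_e_pow (p : ℕ) (x : ℝ) :
    (1 + e x) ^ p = ∑ j ∈ range (p+1), (p.choose j : ℂ) * e ((j:ℝ) * x) := by
  rw [add_comm, add_pow]
  refine Finset.sum_congr rfl fun j hj => ?_
  rw [e_nat_mul, one_pow]; ring

lemma factor_expand (p : ℕ) (x : ℝ) :
    ((2 * Real.cos (π * x) : ℝ) : ℂ) ^ (2 * p) =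
    ∑ jj ∈ range (p+1) ×ˢ range (p+1),
      ((p.choose jj.1 * p.choose jj.2 : ℕ) : ℂ) * e (((jj.1 : ℝ) - (jj.2 : ℝ)) * x) := by
  rw [pow_mul, two_cos_eq, mul_pow, one_add_e_pow, one_add_e_pow, Finset.sum_mul_sum,
    Finset.sum_product]
  refine Finset.sum_congr rfl fun j hj => Finset.sum_congr rfl fun j' hj' => ?_
  have : ((j:ℝ) - j') * x = j * x + j' * (-x) := by ring
  rw [this, e_add]
  push_cast; ring

lemma cos_sq_le {ε' : ℝ} (h1 : 0 < ε') (h2 : ε' ≤ 1/4) {x : ℝ} (hx : ∀ z : ℤ, ε' ≤ |x - z|) :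
    (2 * Real.cos (π * x))^2 ≤ 2 + 2 * Real.cos (2 * π * ε') := by
  have hy2 : |x - round x| ≤ 1/2 := abs_sub_round x
  have hy1 : ε' ≤ |x - round x| := hx (round x)
  set y := x - round x with hy
  have hcos : Real.cos (2 * π * x) = Real.cos (2 * π * |y|) := by
    have habs : 2 * π * |y| = |2 * π * y| := by
      rw [abs_mul, abs_of_pos (by positivity : (0:ℝ) < 2 * π)]
    rw [habs, Real.cos_abs]
    have : 2 * π * x = 2 * π * y + (round x : ℤ) * (2 * π) := by rw [hy]; ring
    rw [this, Real.cos_add_int_mul_two_pi]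
  have hmono : Real.cos (2 * π * |y|) ≤ Real.cos (2 * π * ε') := by
    apply Real.cos_le_cos_of_nonneg_of_le_pi
    · positivity
    · nlinarith [Real.pi_pos]
    · nlinarith [Real.pi_pos]
  have hsq : (2 * Real.cos (π * x))^2 = 2 + 2 * Real.cos (2 * π * x) := by
    have h := Real.cos_sq (π * x)
    rw [show 2 * π * x = 2 * (π * x) by ring]
    linear_combination 4 * h
  rw [hsq, hcos]
  nlinarith [hmono]

set_option maxHeartbeats 2000000 in
theorem kronecker {ι : Type*} [Fintype ι] [DecidableEq ι] (θ α : ι → ℝ)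
    (hindep : ∀ m : ι → ℤ, (∃ z : ℤ, ∑ i, (m i : ℝ) * θ i = (z:ℝ)) → m = 0)
    {ε : ℝ} (hε : 0 < ε) :
    ∃ q : ℕ, ∀ i, ∃ z : ℤ, |(q:ℝ) * θ i - α i - z| < ε := by
  by_contra hcon
  push_neg at hcon
  -- dimension
  rcases Nat.eq_zero_or_pos (Fintype.card ι) with hd0 | hdpos
  · have : IsEmpty ι := Fintype.card_eq_zero_iff.mp hd0
    obtain ⟨i, -⟩ := hcon 0
    exact this.elim i
  obtain ⟨d', hd'⟩ : ∃ d', Fintype.card ι = d' + 1 := ⟨Fintype.card ι - 1, by omega⟩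
  set d : ℕ := Fintype.card ι with hdd
  -- epsilon normalization
  set ε' : ℝ := min ε (1/4) with hε'def
  have hε'pos : 0 < ε' := lt_min hε (by norm_num)
  have hε'le : ε' ≤ 1/4 := min_le_right _ _
  set r : ℝ := (2 + 2 * Real.cos (2 * π * ε')) / 4 with hrdef
  have hr0 : 0 < r := by
    have : 0 ≤ Real.cos (2 * π * ε') := by
      apply Real.cos_nonneg_of_mem_Icc
      constructor
      · nlinarith [Real.pi_pos]
      · nlinarith [Real.pi_pos]
    nlinarith
  have hr1 : r < 1 := by
    have : Real.cos (2 * π * ε') < Real.cos 0 := by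
      apply Real.cos_lt_cos_of_nonneg_of_le_pi (le_refl 0)
      · nlinarith [Real.pi_pos]
      · positivity
    rw [Real.cos_zero] at this
    nlinarith
  -- choose p
  obtain ⟨p, hp⟩ : ∃ p : ℕ, ((p:ℝ)+1)^d * r^p < 1 := by
    have hsum : Summable (fun n : ℕ => (n:ℝ)^d * r^n) := by
      apply summable_pow_mul_geometric_of_norm_lt_one
      rw [Real.norm_eq_abs, abs_of_pos hr0]; exact hr1
    have htend := hsum.tendsto_atTop_zero
    have h2 : Filter.Tendsto (fun n : ℕ => ((n+1:ℕ):ℝ)^d * r^(n+1)) Filter.atTop (nhds 0) :=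
      htend.comp (Filter.tendsto_add_atTop_nat 1)
    have := (h2.eventually (gt_mem_nhds hr0)).exists
    obtain ⟨p, hp⟩ := this
    refine ⟨p, ?_⟩
    push_cast at hp
    have : ((p:ℝ)+1)^d * r^(p+1) < r := hp
    have hrp : ((p:ℝ)+1)^d * r^p * r < 1 * r := by
      calc ((p:ℝ)+1)^d * r^p * r = ((p:ℝ)+1)^d * r^(p+1) := by ring
      _ < r := this
      _ = 1 * r := by ring
    exact lt_of_mul_lt_mul_right hrp hr0.le
  -- notation
  classical
  set sqF : Finset (ℕ × ℕ) := range (p+1) ×ˢ range (p+1) with hsqdef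
  set Jset : Finset (ι → ℕ × ℕ) := Fintype.piFinset (fun _ => sqF) with hJsetdef
  set mz : (ι → ℕ × ℕ) → ι → ℤ := fun J i => ((J i).1 : ℤ) - ((J i).2 : ℤ) with hmzdef
  set Mv : (ι → ℕ × ℕ) → ℝ := fun J => ∑ i, (mz J i : ℝ) * θ i with hMvdef
  set Av : (ι → ℕ × ℕ) → ℝ := fun J => ∑ i, (mz J i : ℝ) * α i with hAvdef
  set cc : (ι → ℕ × ℕ) → ℝ := fun J => ∏ i, ((p.choose (J i).1 : ℝ) * (p.choose (J i).2 : ℝ))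
    with hccdef
  set F : ℕ → ℝ := fun q => ∏ i, (2 * Real.cos (π * ((q:ℝ) * θ i - α i)))^(2*p) with hFdef
  have hccnonneg : ∀ J, 0 ≤ cc J := fun J => Finset.prod_nonneg fun i _ => by positivity
  have expand : ∀ q : ℕ, (F q : ℂ) = ∑ J ∈ Jset, (cc J : ℂ) * (e (Mv J))^q * e (-(Av J)) := by
    intro q
    rw [hFdef]
    calc ((∏ i, (2 * Real.cos (π * ((q:ℝ) * θ i - α i)))^(2*p) : ℝ) : ℂ)
        = ∏ i, ((2 * Real.cos (π * ((q:ℝ) * θ i - α i)) : ℝ) : ℂ)^(2*p) := by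
          rw [Complex.ofReal_prod]
          exact Finset.prod_congr rfl fun i _ => Complex.ofReal_pow _ _
      _ = ∏ i, ∑ jj ∈ sqF, ((p.choose jj.1 * p.choose jj.2 : ℕ) : ℂ) *
            e (((jj.1:ℝ) - (jj.2:ℝ)) * ((q:ℝ) * θ i - α i)) :=
          Finset.prod_congr rfl fun i _ => factor_expand p _
      _ = ∑ J ∈ Jset, ∏ i, (((p.choose (J i).1 * p.choose (J i).2 : ℕ) : ℂ) *
            e ((((J i).1:ℝ) - ((J i).2:ℝ)) * ((q:ℝ) * θ i - α i))) :=
          Finset.prod_univ_sum _ _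
      _ = ∑ J ∈ Jset, (cc J : ℂ) * (e (Mv J))^q * e (-(Av J)) := by
          refine Finset.sum_congr rfl fun J _ => ?_
          rw [Finset.prod_mul_distrib]
          have h1 : (∏ i, ((p.choose (J i).1 * p.choose (J i).2 : ℕ) : ℂ)) = (cc J : ℂ) := by
            rw [hccdef, Complex.ofReal_prod]
            exact Finset.prod_congr rfl fun i _ => by push_cast; ring
          have h2 : (∏ i, e ((((J i).1:ℝ) - ((J i).2:ℝ)) * ((q:ℝ) * θ i - α i)))
              = (e (Mv J))^q * e (-(Av J)) := by
            rw [← e_sum]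
            have harg : ∑ i, (((J i).1:ℝ) - ((J i).2:ℝ)) * ((q:ℝ) * θ i - α i)
                = (q:ℝ) * Mv J + (-(Av J)) := by
              rw [hMvdef, hAvdef, Finset.mul_sum, ← Finset.sum_neg_distrib,
                ← Finset.sum_add_distrib]
              refine Finset.sum_congr rfl fun i _ => ?_
              rw [hmzdef]; push_cast; ring
            rw [harg, e_add, e_nat_mul]
          rw [h1, h2]; ring
  set T : ℕ → ℝ := fun Q => ∑ q ∈ range Q, F q with hTdef
  have Texpand : ∀ Q : ℕ, (T Q : ℂ) =
      ∑ J ∈ Jset, (cc J : ℂ) * e (-(Av J)) * ∑ q ∈ range Q, (e (Mv J))^q := by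
    intro Q
    rw [hTdef]
    calc ((∑ q ∈ range Q, F q : ℝ) : ℂ) = ∑ q ∈ range Q, (F q : ℂ) := Complex.ofReal_sum _ _
      _ = ∑ q ∈ range Q, ∑ J ∈ Jset, (cc J : ℂ) * (e (Mv J))^q * e (-(Av J)) :=
          Finset.sum_congr rfl fun q _ => expand q
      _ = ∑ J ∈ Jset, ∑ q ∈ range Q, (cc J : ℂ) * (e (Mv J))^q * e (-(Av J)) := Finset.sum_comm
      _ = ∑ J ∈ Jset, (cc J : ℂ) * e (-(Av J)) * ∑ q ∈ range Q, (e (Mv J))^q := by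
          refine Finset.sum_congr rfl fun J _ => ?_
          rw [Finset.mul_sum]
          exact Finset.sum_congr rfl fun q _ => by ring
  -- diagonal / offdiagonal split
  set Pd : (ι → ℕ × ℕ) → Prop := fun J => ∀ i, (J i).1 = (J i).2 with hPddef
  set Sdiag : ℝ := ∑ J ∈ Jset.filter Pd, cc J with hSdiagdef
  set K : ℝ := ∑ J ∈ Jset.filter (fun J => ¬ Pd J), cc J * 2 / ‖e (Mv J) - 1‖
    with hKdef
  have hKnonneg : 0 ≤ K := Finset.sum_nonneg fun J _ => by positivity
  have hdiagJ : ∀ J, Pd J → Mv J = 0 ∧ Av J = 0 := by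
    intro J hJ
    have hz : ∀ i, (mz J i : ℝ) = 0 := by
      intro i; rw [hmzdef]; simp [hJ i]
    constructor
    · rw [hMvdef]; exact Finset.sum_eq_zero fun i _ => by rw [hz i, zero_mul]
    · rw [hAvdef]; exact Finset.sum_eq_zero fun i _ => by rw [hz i, zero_mul]
  have hoffJ : ∀ J, ¬ Pd J → e (Mv J) ≠ 1 := by
    intro J hJ habs
    obtain ⟨z, hz⟩ := e_eq_one_iff.mp habs
    simp only [hMvdef] at hz
    have := hindep (mz J) ⟨z, hz⟩
    apply hJ
    intro i
    have h0 : ((J i).1:ℤ) - ((J i).2:ℤ) = 0 := by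
      have hfi := congrFun this i
      simpa [hmzdef] using hfi
    omega
  have Tbound : ∀ Q : ℕ, |T Q - Sdiag * Q| ≤ K := by
    intro Q
    have hTc : ((T Q - Sdiag * Q : ℝ) : ℂ) =
        ∑ J ∈ Jset.filter (fun J => ¬ Pd J),
          (cc J : ℂ) * e (-(Av J)) * ∑ q ∈ range Q, (e (Mv J))^q := by
      push_cast
      rw [Texpand Q, ← Finset.sum_filter_add_sum_filter_not Jset Pd
        (fun J => (cc J : ℂ) * e (-(Av J)) * ∑ q ∈ range Q, (e (Mv J))^q)]
      have hdiagsum : ∑ J ∈ Jset.filter Pd,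
          (cc J : ℂ) * e (-(Av J)) * ∑ q ∈ range Q, (e (Mv J))^q = (Sdiag : ℂ) * Q := by
        rw [hSdiagdef]
        push_cast
        rw [Finset.sum_mul]
        refine Finset.sum_congr rfl fun J hJ => ?_
        obtain ⟨hM, hA⟩ := hdiagJ J (Finset.mem_filter.mp hJ).2
        rw [hM, hA, neg_zero, e_zero]
        simp
      rw [hdiagsum]; ring
    have habs : |T Q - Sdiag * Q| = ‖((T Q - Sdiag * Q : ℝ) : ℂ)‖ := by
      rw [Complex.norm_real, Real.norm_eq_abs]
    rw [habs, hTc]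
    calc ‖∑ J ∈ Jset.filter (fun J => ¬ Pd J),
          (cc J : ℂ) * e (-(Av J)) * ∑ q ∈ range Q, (e (Mv J))^q‖
        ≤ ∑ J ∈ Jset.filter (fun J => ¬ Pd J),
          ‖(cc J : ℂ) * e (-(Av J)) * ∑ q ∈ range Q, (e (Mv J))^q‖ :=
          norm_sum_le _ _
      _ ≤ K := by
          rw [hKdef]
          refine Finset.sum_le_sum fun J hJ => ?_
          have hne := hoffJ J (Finset.mem_filter.mp hJ).2
          have hden : 0 < ‖e (Mv J) - 1‖ := by
            rw [norm_pos_iff]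
            exact sub_ne_zero.mpr hne
          have hnum : ‖e (Mv J) ^ Q - 1‖ ≤ 2 := by
            calc ‖e (Mv J) ^ Q - 1‖
                ≤ ‖e (Mv J) ^ Q‖ + ‖(1:ℂ)‖ := by
                  exact norm_sub_le (e (Mv J) ^ Q) 1
              _ = 2 := by rw [norm_pow, abs_e, one_pow, norm_one]; norm_num
          rw [norm_mul, norm_mul, Complex.norm_real, Real.norm_eq_abs, abs_e,
            _root_.abs_of_nonneg (hccnonneg J), mul_one, geom_sum_eq hne, norm_div,
            mul_div_assoc]
          gcongr
  -- diagonal lower bound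
  set B : ℝ := ∑ j ∈ range (p+1), ((p.choose j : ℝ))^2 with hBdef
  have hBlow : 4^p / ((p:ℝ)+1) ≤ B := by
    have hcs := sq_sum_le_card_mul_sum_sq (s := range (p+1)) (f := fun j => ((p.choose j : ℝ)))
    have hsumch : ∑ j ∈ range (p+1), ((p.choose j : ℝ)) = 2^p := by
      rw [← Nat.cast_sum, Nat.sum_range_choose]; push_cast; ring
    rw [hsumch, Finset.card_range] at hcs
    rw [div_le_iff₀ (by positivity)]
    push_cast at hcs
    have h4 : ((2:ℝ)^p)^2 = 4^p := by
      rw [← pow_mul, show (4:ℝ) = 2^2 by norm_num, ← pow_mul, mul_comm]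
    nlinarith [hcs, h4]
  have hSdiaglow : B^d ≤ Sdiag := by
    have himg : ((Fintype.piFinset (fun _ : ι => range (p+1))).image
        (fun j : ι → ℕ => fun i => (j i, j i))) ⊆ Jset.filter Pd := by
      intro J hJ
      simp only [Finset.mem_image] at hJ
      obtain ⟨j, hj, rfl⟩ := hJ
      refine Finset.mem_filter.mpr ⟨?_, fun i => rfl⟩
      rw [hJsetdef]
      rw [Fintype.mem_piFinset]
      intro i
      have hji := Fintype.mem_piFinset.mp hj i
      rw [hsqdef]
      exact Finset.mem_product.mpr ⟨hji, hji⟩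
    have hinj : ∀ a ∈ Fintype.piFinset (fun _ : ι => range (p+1)),
        ∀ b ∈ Fintype.piFinset (fun _ : ι => range (p+1)),
        (fun j : ι → ℕ => fun i => (j i, j i)) a = (fun j : ι → ℕ => fun i => (j i, j i)) b →
        a = b := by
      intro a _ b _ hab
      funext i
      have h := congrFun hab i
      exact (Prod.mk.injEq _ _ _ _ ▸ h).1
    have himgsum : ∑ J ∈ (Fintype.piFinset (fun _ : ι => range (p+1))).image
        (fun j : ι → ℕ => fun i => (j i, j i)), cc J = B^d := by
      rw [Finset.sum_image hinj]
      have hcj : ∀ j : ι → ℕ, cc (fun i => (j i, j i)) = ∏ i, ((p.choose (j i) : ℝ))^2 := by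
        intro j
        rw [hccdef]
        exact Finset.prod_congr rfl fun i _ => (pow_two ((p.choose (j i) : ℝ))).symm
      rw [Finset.sum_congr rfl fun j _ => hcj j,
        Finset.sum_prod_piFinset (range (p+1)) (fun (_i : ι) (j : ℕ) => ((p.choose j : ℝ))^2)]
      rw [show (∏ _i : ι, ∑ j ∈ range (p+1), ((p.choose j : ℝ))^2) = B^d by
        rw [Finset.prod_const, Finset.card_univ, ← hBdef, hdd]]
    calc B^d = _ := himgsum.symm
      _ ≤ Sdiag := Finset.sum_le_sum_of_subset_of_nonneg himg fun J _ _ => hccnonneg J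
  -- upper bound on F
  have hFup : ∀ q : ℕ, F q ≤ 4^(p*d) * r^p := by
    intro q
    obtain ⟨i0, hi0⟩ := hcon q
    have hfac0 : (2 * Real.cos (π * ((q:ℝ) * θ i0 - α i0)))^(2*p) ≤ (4*r)^p := by
      rw [pow_mul]
      apply pow_le_pow_left₀ (sq_nonneg _)
      have hcs := cos_sq_le hε'pos hε'le
        (x := (q:ℝ) * θ i0 - α i0) (fun z => le_trans (min_le_left _ _) (hi0 z))
      rw [hrdef]; linarith
    have hfac : ∀ i, (2 * Real.cos (π * ((q:ℝ) * θ i - α i)))^(2*p) ≤ 4^p := by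
      intro i
      rw [pow_mul]
      apply pow_le_pow_left₀ (sq_nonneg _)
      nlinarith [Real.neg_one_le_cos (π * ((q:ℝ) * θ i - α i)),
        Real.cos_le_one (π * ((q:ℝ) * θ i - α i))]
    have hnn : ∀ i, 0 ≤ (2 * Real.cos (π * ((q:ℝ) * θ i - α i)))^(2*p) := fun i => by
      rw [pow_mul]; positivity
    rw [hFdef]
    calc ∏ i, (2 * Real.cos (π * ((q:ℝ) * θ i - α i)))^(2*p)
        = (2 * Real.cos (π * ((q:ℝ) * θ i0 - α i0)))^(2*p) *
          ∏ i ∈ univ.erase i0, (2 * Real.cos (π * ((q:ℝ) * θ i - α i)))^(2*p) :=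
          (Finset.mul_prod_erase univ _ (Finset.mem_univ i0)).symm
      _ ≤ (4*r)^p * ∏ i ∈ univ.erase i0, (4:ℝ)^p := by
          apply mul_le_mul hfac0 (Finset.prod_le_prod (fun i _ => hnn i) (fun i _ => hfac i))
            (Finset.prod_nonneg fun i _ => hnn i) (by positivity)
      _ = (4*r)^p * ((4:ℝ)^p)^(d-1) := by
          rw [Finset.prod_const, Finset.card_erase_of_mem (Finset.mem_univ _), Finset.card_univ,
            ← hdd]
      _ = 4^(p*d) * r^p := by
          rw [hd', show d' + 1 - 1 = d' from rfl, mul_pow, ← pow_mul,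
            show p * (d' + 1) = p + p * d' by ring, pow_add]
          ring
  have hTup : ∀ Q : ℕ, T Q ≤ Q * (4^(p*d) * r^p) := by
    intro Q
    rw [hTdef]
    calc ∑ q ∈ range Q, F q ≤ ∑ _q ∈ range Q, 4^(p*d) * r^p :=
          Finset.sum_le_sum fun q _ => hFup q
      _ = Q * (4^(p*d) * r^p) := by rw [Finset.sum_const, card_range, nsmul_eq_mul]
  -- final contradiction
  have hgap : 4^(p*d) * r^p < Sdiag := by
    have h1 : (4:ℝ)^(p*d) * r^p < 4^(p*d) / ((p:ℝ)+1)^d := by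
      rw [lt_div_iff₀ (by positivity)]
      nlinarith [hp, pow_pos (show (0:ℝ) < 4 by norm_num) (p*d),
        pow_nonneg hr0.le p, pow_pos (show (0:ℝ) < (p:ℝ)+1 by positivity) d]
    have h2 : (4:ℝ)^(p*d) / ((p:ℝ)+1)^d ≤ B^d := by
      rw [show (4:ℝ)^(p*d) / ((p:ℝ)+1)^d = ((4:ℝ)^p / ((p:ℝ)+1))^d by rw [div_pow, ← pow_mul]]
      exact pow_le_pow_left₀ (by positivity) hBlow d
    linarith
  obtain ⟨Q, hQ⟩ := exists_nat_gt (K / (Sdiag - 4^(p*d) * r^p))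
  have hgappos : (0:ℝ) < Sdiag - 4^(p*d) * r^p := by linarith
  have hK : K < Q * (Sdiag - 4^(p*d) * r^p) := by rwa [div_lt_iff₀ hgappos] at hQ
  have hlow : Sdiag * Q - K ≤ T Q := by
    have hb := abs_le.mp (Tbound Q)
    linarith [hb.1]
  have hup := hTup Q
  nlinarith [hlow, hup, hK]

set_option maxHeartbeats 1000000 in
lemma indep (k : ℕ) (hk : 2 ≤ k) :
    ∀ m : ↥(Finset.Ioo 0 (2^(k-2))) → ℤ,
      (∃ z : ℤ, ∑ i, (m i : ℝ) * (2 * Real.cos (2 * π * (i : ℕ) / ((2^k : ℕ) : ℝ))) = (z:ℝ)) →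
      m = 0 := by
  set n : ℕ := 2^k with hn
  set N : ℕ := 2^(k-1) with hN
  set a : ℕ := 2^(k-2) with ha
  intro m ⟨z, hz⟩
  have hNa : N = 2 * a := by rw [hN, ha, ← pow_succ']; congr 1; omega
  have hnN : n = 2 * N := by rw [hn, hN, ← pow_succ']; congr 1; omega
  have hnpos : 0 < n := Nat.pow_pos (by norm_num)
  -- primitive root
  set ζ : ℂ := Complex.exp (2 * π * Complex.I / n) with hζ
  have hprim : IsPrimitiveRoot ζ n := Complex.isPrimitiveRoot_exp n hnpos.ne'
  have hζN : ζ ^ N = -1 := by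
    rw [hζ, ← Complex.exp_nat_mul]
    rw [show (N:ℂ) * (2 * π * Complex.I / n) = π * Complex.I by
      rw [hnN]
      have h2N : ((2 * N : ℕ) : ℂ) ≠ 0 := Nat.cast_ne_zero.mpr (by positivity)
      rw [mul_div_assoc']
      rw [div_eq_iff h2N]
      push_cast
      ring]
    exact Complex.exp_pi_mul_I
  have hζl : ∀ l : ℕ, 0 < l → l < N → ζ ^ l - ζ ^ (N - l) =
      ((2 * Real.cos (2 * π * l / (n:ℝ)) : ℝ) : ℂ) := by
    intro l h0 hl
    have h2 : ζ ^ l ≠ 0 := pow_ne_zero _ (by rw [hζ]; exact Complex.exp_ne_zero _)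
    have hinv : ζ ^ (N - l) = - (ζ ^ l)⁻¹ := by
      have h1 : ζ ^ (N - l) * ζ ^ l = -1 := by
        rw [← pow_add, show N - l + l = N by omega, hζN]
      have := eq_div_of_mul_eq h2 h1
      rw [this, neg_div, one_div]
    rw [hinv, sub_neg_eq_add]
    have hpl : ζ ^ l = Complex.exp (((2 * π * l / n : ℝ) : ℂ) * Complex.I) := by
      rw [hζ, ← Complex.exp_nat_mul]
      congr 1
      push_cast
      ring
    rw [hpl, ← Complex.exp_neg]
    have h2c := Complex.two_cos (((2 * π * l / n : ℝ)) : ℂ)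
    rw [neg_mul] at h2c
    rw [← h2c, ← Complex.ofReal_cos]
    push_cast
    ring
  -- the polynomial
  set P : ℚ[X] := (∑ i : ↥(Finset.Ioo 0 a),
      Polynomial.C ((m i : ℚ)) * (X ^ (i:ℕ) - X ^ (N - (i:ℕ)))) - Polynomial.C (z:ℚ) with hP
  have haeval : Polynomial.aeval ζ P = 0 := by
    rw [hP]
    rw [map_sub, map_sum]
    simp only [map_mul, map_sub, map_pow, Polynomial.aeval_X, Polynomial.aeval_C, eq_ratCast]
    have hterm : ∀ i : ↥(Finset.Ioo 0 a),
        ((m i : ℚ) : ℂ) * (ζ ^ (i:ℕ) - ζ ^ (N - (i:ℕ))) =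
        ((m i : ℝ) * (2 * Real.cos (2 * π * (i:ℕ) / (n:ℝ))) : ℝ) := by
      intro i
      have hi := Finset.mem_Ioo.mp i.2
      rw [hζl (i:ℕ) hi.1 (by omega)]
      push_cast
      ring
    rw [Finset.sum_congr rfl fun i _ => hterm i]
    rw [← Complex.ofReal_sum]
    rw [hz]
    have : ((z:ℚ):ℂ) = ((z:ℝ):ℂ) := by push_cast; ring
    rw [this]
    ring
  have hdvd : minpoly ℚ ζ ∣ P := minpoly.dvd ℚ ζ haeval
  have hmin : minpoly ℚ ζ = Polynomial.cyclotomic n ℚ :=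
    (Polynomial.cyclotomic_eq_minpoly_rat hprim hnpos).symm
  have hdeg : (Polynomial.cyclotomic n ℚ).natDegree = N := by
    rw [Polynomial.natDegree_cyclotomic, hn, Nat.totient_prime_pow Nat.prime_two (by omega : 0 < k)]
    rw [hN]
    simp
  have hPdeg : P.natDegree < N := by
    have hterm : ∀ i : ↥(Finset.Ioo 0 a),
        (Polynomial.C ((m i : ℚ)) * (X ^ (i:ℕ) - X ^ (N - (i:ℕ)))).natDegree ≤ N - 1 := by
      intro i
      have hi := Finset.mem_Ioo.mp i.2
      calc (Polynomial.C ((m i : ℚ)) * (X ^ (i:ℕ) - X ^ (N - (i:ℕ)))).natDegree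
          ≤ (Polynomial.C ((m i : ℚ))).natDegree + (X ^ (i:ℕ) - X ^ (N - (i:ℕ)) : ℚ[X]).natDegree :=
            Polynomial.natDegree_mul_le
        _ = (X ^ (i:ℕ) - X ^ (N - (i:ℕ)) : ℚ[X]).natDegree := by
            rw [Polynomial.natDegree_C, zero_add]
        _ ≤ max (X ^ (i:ℕ) : ℚ[X]).natDegree (X ^ (N - (i:ℕ)) : ℚ[X]).natDegree :=
            Polynomial.natDegree_sub_le _ _
        _ ≤ N - 1 := by
            simp only [Polynomial.natDegree_X_pow, max_le_iff]
            omega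
    have h1 : P.natDegree ≤ N - 1 := by
      rw [hP]
      refine le_trans (Polynomial.natDegree_sub_le _ _) ?_
      simp only [Polynomial.natDegree_C, max_le_iff]
      exact ⟨Polynomial.natDegree_sum_le_of_forall_le Finset.univ _ fun i _ => hterm i,
        Nat.zero_le _⟩
    have hNpos : 0 < N := Nat.pow_pos (by norm_num)
    omega
  have hP0 : P = 0 := by
    by_contra hne
    have := Polynomial.natDegree_le_of_dvd (hmin ▸ hdvd) hne
    rw [hdeg] at this
    omega
  -- extract coefficients
  funext i0
  have hi0 := Finset.mem_Ioo.mp i0.2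
  have hcoeff : P.coeff (i0:ℕ) = (m i0 : ℚ) := by
    rw [hP]
    rw [Polynomial.coeff_sub, Polynomial.finset_sum_coeff]
    rw [Polynomial.coeff_C, if_neg (by omega : ¬ ((i0:ℕ) = 0))]
    rw [sub_zero]
    rw [Finset.sum_eq_single i0]
    · rw [Polynomial.coeff_C_mul, Polynomial.coeff_sub, Polynomial.coeff_X_pow,
        Polynomial.coeff_X_pow, if_pos rfl, if_neg (by omega : ¬ ((i0:ℕ) = N - (i0:ℕ)))]
      ring
    · intro i _ hne
      have hii := Finset.mem_Ioo.mp i.2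
      rw [Polynomial.coeff_C_mul, Polynomial.coeff_sub, Polynomial.coeff_X_pow,
        Polynomial.coeff_X_pow]
      have hne' : (i:ℕ) ≠ (i0:ℕ) := fun h => hne (Subtype.ext h)
      rw [if_neg (fun h => hne' h.symm), if_neg (by omega : ¬ ((i0:ℕ) = N - (i:ℕ)))]
      ring
    · intro h
      exact absurd (Finset.mem_univ i0) h
  rw [hP0] at hcoeff
  simp only [Polynomial.coeff_zero] at hcoeff
  have : (m i0 : ℚ) = 0 := hcoeff.symm
  exact_mod_cast this

lemma classify (a : ℕ) (ha : 0 < a) (l : ℕ) (hl : l < 4*a) :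
    (∃ c : ℤ, Real.cos (2 * π * l / ((4*a : ℕ) : ℝ)) = c) ∨
    (∃ i : ℕ, i ∈ Finset.Ioo 0 a ∧ ∃ s : ℤ, (s = 1 ∨ s = -1) ∧
      Real.cos (2 * π * l / ((4*a : ℕ) : ℝ)) = (s:ℝ) * Real.cos (2 * π * i / ((4*a : ℕ) : ℝ))) := by
  have ha' : ((4*a : ℕ) : ℝ) ≠ 0 := Nat.cast_ne_zero.mpr (by omega)
  have haR : (0:ℝ) < (a:ℝ) := by exact_mod_cast ha
  rcases (by omega : l = 0 ∨ l = a ∨ l = 2*a ∨ l = 3*a ∨ (0 < l ∧ l < a) ∨ (a < l ∧ l < 2*a)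
      ∨ (2*a < l ∧ l < 3*a) ∨ (3*a < l ∧ l < 4*a)) with
    h | h | h | h | h | h | h | h
  · left; refine ⟨1, ?_⟩
    rw [show (l:ℝ) = 0 by exact_mod_cast h]
    simp
  · left; refine ⟨0, ?_⟩
    have hc : (l:ℝ) = (a:ℝ) := by exact_mod_cast h
    rw [show 2 * π * (l:ℝ) / ((4*a : ℕ) : ℝ) = π/2 by
      rw [hc]; push_cast; field_simp [haR.ne']; ring]
    simp [Real.cos_pi_div_two]
  · left; refine ⟨-1, ?_⟩
    have hc : (l:ℝ) = 2*(a:ℝ) := by exact_mod_cast h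
    rw [show 2 * π * (l:ℝ) / ((4*a : ℕ) : ℝ) = π by
      rw [hc]; push_cast; field_simp [haR.ne']; ring]
    simp [Real.cos_pi]
  · left; refine ⟨0, ?_⟩
    have hc : (l:ℝ) = 3*(a:ℝ) := by exact_mod_cast h
    rw [show 2 * π * (l:ℝ) / ((4*a : ℕ) : ℝ) = π/2 + π by
      rw [hc]; push_cast; field_simp [haR.ne']; ring]
    simp [Real.cos_add_pi, Real.cos_pi_div_two]
  · right
    exact ⟨l, Finset.mem_Ioo.mpr h, 1, Or.inl rfl, by norm_num⟩
  · right
    refine ⟨2*a - l, Finset.mem_Ioo.mpr (by omega), -1, Or.inr rfl, ?_⟩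
    have hnat : ((2*a - l : ℕ) : ℝ) = 2*(a:ℝ) - l := by
      have : (l:ℝ) ≤ 2*(a:ℝ) := by exact_mod_cast (by omega : l ≤ 2*a)
      push_cast [Nat.cast_sub (by omega : l ≤ 2*a)]
      ring
    rw [show 2 * π * (l:ℝ) / ((4*a : ℕ) : ℝ) = π - 2 * π * ((2*a - l : ℕ):ℝ) / ((4*a : ℕ) : ℝ) by
      rw [hnat]; push_cast; field_simp [haR.ne']; ring]
    rw [Real.cos_pi_sub]
    push_cast; ring
  · right
    refine ⟨l - 2*a, Finset.mem_Ioo.mpr (by omega), -1, Or.inr rfl, ?_⟩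
    have hnat : ((l - 2*a : ℕ) : ℝ) = (l:ℝ) - 2*(a:ℝ) := by
      push_cast [Nat.cast_sub (by omega : 2*a ≤ l)]
      ring
    rw [show 2 * π * (l:ℝ) / ((4*a : ℕ) : ℝ) = 2 * π * ((l - 2*a : ℕ):ℝ) / ((4*a : ℕ) : ℝ) + π by
      rw [hnat]; push_cast; field_simp [haR.ne']; ring]
    rw [Real.cos_add_pi]
    push_cast; ring
  · right
    refine ⟨4*a - l, Finset.mem_Ioo.mpr (by omega), 1, Or.inl rfl, ?_⟩
    have hnat : ((4*a - l : ℕ) : ℝ) = 4*(a:ℝ) - l := by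
      push_cast [Nat.cast_sub (by omega : l ≤ 4*a)]
      ring
    rw [show 2 * π * (l:ℝ) / ((4*a : ℕ) : ℝ) = 2*π - 2 * π * ((4*a - l : ℕ):ℝ) / ((4*a : ℕ) : ℝ) by
      rw [hnat]; push_cast; field_simp [haR.ne']; ring]
    rw [Real.cos_two_pi_sub]
    push_cast; ring

end CEAH

open Real

open CEAH in
/-- For `n = 2^k`, there is a time `t = (2q+1)π/2` such that every eigenvalue
`λ_l = 2cos(2πl/n)` of `C_n` satisfies `|λ_l t - l'π| < δ/n` for some integer `l'`. -/
theorem cycle_eigenvalue_approx_half (k : ℕ) (n : ℕ) (hn : n = 2 ^ k) :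
    ∀ δ > 0, ∃ q : ℤ, ∀ l < n, ∃ l' : ℤ,
      |2 * Real.cos (2 * π * l / n) * ((2 * q + 1) * π / 2) - l' * π| < δ / n := by
  intro δ hδ
  subst hn
  have hnpos : (0:ℝ) < ((2^k : ℕ) : ℝ) := by positivity
  have hδn : 0 < δ / ((2^k : ℕ) : ℝ) := by positivity
  by_cases hk2 : k < 2
  · -- small cases : all eigenvalues are ±2
    refine ⟨0, fun l hl => ?_⟩
    have hcos : ∃ c : ℤ, Real.cos (2 * π * l / ((2^k : ℕ) : ℝ)) = c := by
      interval_cases k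
      · refine ⟨1, ?_⟩
        have : l = 0 := by omega
        subst this
        simp
      · have : l = 0 ∨ l = 1 := by omega
        rcases this with rfl | rfl
        · exact ⟨1, by simp⟩
        · refine ⟨-1, ?_⟩
          rw [show 2 * π * (1:ℕ) / ((2^1 : ℕ) : ℝ) = π by push_cast; ring]
          simp
    obtain ⟨c, hc⟩ := hcos
    refine ⟨(2*0+1)*c, ?_⟩
    rw [hc]
    have hzero : 2 * (c:ℝ) * ((2 * ((0:ℤ):ℝ) + 1) * π / 2) - (((2*0+1)*c : ℤ):ℝ) * π = 0 := by
      push_cast; ring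
    rw [hzero, abs_zero]
    exact hδn
  · push_neg at hk2
    set a : ℕ := 2^(k-2) with ha
    have hapos : 0 < a := Nat.pow_pos (by norm_num)
    have hn4 : (2^k : ℕ) = 4*a := by
      rw [ha, show (4:ℕ) = 2^2 by norm_num, ← pow_add]
      congr 1
      omega
    set θ : ↥(Finset.Ioo 0 a) → ℝ :=
      fun i => 2 * Real.cos (2 * π * (i:ℕ) / ((2^k : ℕ) : ℝ)) with hθ
    set α : ↥(Finset.Ioo 0 a) → ℝ :=
      fun i => - Real.cos (2 * π * (i:ℕ) / ((2^k : ℕ) : ℝ)) with hα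
    have hε : 0 < δ / (((2^k : ℕ) : ℝ) * π) := by positivity
    obtain ⟨q, hq⟩ := kronecker θ α (indep k hk2) hε
    refine ⟨(q:ℤ), fun l hl => ?_⟩
    rcases classify a hapos l (by omega) with ⟨c, hc⟩ | ⟨i, hi, s, hs, hcos⟩
    · rw [show ((4*a : ℕ):ℝ) = ((2^k : ℕ):ℝ) by rw [hn4]] at hc
      refine ⟨(2*(q:ℤ)+1)*c, ?_⟩
      rw [hc]
      have hzero : 2 * (c:ℝ) * ((2 * ((q:ℤ):ℝ) + 1) * π / 2) - (((2*(q:ℤ)+1)*c : ℤ):ℝ) * π = 0 := by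
        push_cast; ring
      rw [hzero, abs_zero]
      exact hδn
    · rw [show ((4*a : ℕ):ℝ) = ((2^k : ℕ):ℝ) by rw [hn4]] at hcos
      obtain ⟨z, hz⟩ := hq ⟨i, hi⟩
      refine ⟨s * z, ?_⟩
      have hsabs : |(s:ℝ)| = 1 := by rcases hs with rfl | rfl <;> simp
      have hrw : 2 * Real.cos (2 * π * l / ((2^k : ℕ) : ℝ)) * ((2 * ((q:ℤ):ℝ) + 1) * π / 2)
          - ((s * z : ℤ):ℝ) * π
          = ((s:ℝ) * ((q:ℝ) * θ ⟨i, hi⟩ - α ⟨i, hi⟩ - z)) * π := by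
        rw [hcos, hθ, hα]
        push_cast
        ring
      rw [hrw, abs_mul, abs_mul, hsabs, one_mul, abs_of_pos Real.pi_pos]
      calc |(q:ℝ) * θ ⟨i, hi⟩ - α ⟨i, hi⟩ - z| * π
          < (δ / (((2^k : ℕ) : ℝ) * π)) * π := by
            exact mul_lt_mul_of_pos_right hz Real.pi_pos
        _ = δ / ((2^k : ℕ) : ℝ) := by field_simp
end
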